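/- For every positive integer n, the stacked path R_n contains no induced subgraph isomorphic to 2K₂ and no induced subgraph isomorphic to the complement of 2K₂. -/

import Mathlib

/-- The matching `mK₂`: the disjoint union of `m` single edges. -/
def matchingGraph (m : ℕ) : SimpleGraph (Fin m × Fin 2) where
  Adj a b := a.1 = b.1 ∧ a.2 ≠ b.2
  symm := by constructor; rintro a b ⟨h1, h2⟩; exact ⟨h1.symm, h2.symm⟩
  loopless := by constructor; rintro a ⟨h1, h2⟩; exact h2 rfl

/-- The stacked path `Rₙ`: `Sum.inl (i, j)` is the clique vertex `c(i+1, j+1)` and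
`Sum.inr (i, j)` is the independent-set vertex `s(i+1, j+1)`; the `c`-vertices form a
clique, the `s`-vertices form an independent set, and `s(u₁,v₁) ~ c(u₂,v₂)` iff
`u₁ > u₂` or (`u₁ = u₂` and `v₁ = v₂`). -/
def stackedPath (n : ℕ) : SimpleGraph ((Fin n × Fin 2) ⊕ (Fin n × Fin 2)) where
  Adj a b :=
    match a, b with
    | Sum.inl c₁, Sum.inl c₂ => c₁ ≠ c₂
    | Sum.inl c, Sum.inr s => c.1 < s.1 ∨ (s.1 = c.1 ∧ s.2 = c.2)
    | Sum.inr s, Sum.inl c => c.1 < s.1 ∨ (s.1 = c.1 ∧ s.2 = c.2)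
    | Sum.inr _, Sum.inr _ => False
  symm := by constructor; rintro (a | a) (b | b) h <;> first | exact h.symm | exact h
  loopless := by
    constructor
    rintro (a | a) h
    · exact h rfl
    · exact h

lemma sp_not_inr_inr (n : ℕ) (s t : Fin n × Fin 2) :
    ¬ (stackedPath n).Adj (Sum.inr s) (Sum.inr t) := fun h => h

lemma sp_inl_inl (n : ℕ) {c d : Fin n × Fin 2} (h : c ≠ d) :
    (stackedPath n).Adj (Sum.inl c) (Sum.inl d) := h

theorem stackedPath_no_matching_no_comatching (n : ℕ) (hn : 0 < n) :
    IsEmpty (matchingGraph 2 ↪g stackedPath n) ∧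
      IsEmpty ((matchingGraph 2)ᶜ ↪g stackedPath n) := by
  constructor
  · constructor
    intro e
    -- each edge of 2K₂ must have an inl endpoint
    have hedge : ∀ i : Fin 2, ∃ p : Fin 2 × Fin 2, p.1 = i ∧ ∃ c, e p = Sum.inl c := by
      intro i
      have hadj : (stackedPath n).Adj (e (i, 0)) (e (i, 1)) :=
        e.map_rel_iff.2 ⟨rfl, Fin.zero_ne_one⟩
      rcases h0 : e (i, 0) with c | s
      · exact ⟨(i, 0), rfl, c, h0⟩
      rcases h1 : e (i, 1) with c | t
      · exact ⟨(i, 1), rfl, c, h1⟩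
      rw [h0, h1] at hadj
      exact absurd hadj (sp_not_inr_inr n s t)
    obtain ⟨p, hp, c, hc⟩ := hedge 0
    obtain ⟨q, hq, d, hd⟩ := hedge 1
    have hpq : p ≠ q := by intro h; subst h; rw [hq] at hp; exact absurd hp (by decide)
    have hcd : c ≠ d := fun h => hpq (e.injective (by rw [hc, hd, h]))
    have : (matchingGraph 2).Adj p q := e.map_rel_iff.1 (by rw [hc, hd]; exact sp_inl_inl n hcd)
    exact absurd this.1 (by rw [hp, hq]; decide)
  · constructor
    intro e
    -- each non-edge pair of C₄ must have an inr endpoint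
    have hpair : ∀ i : Fin 2, ∃ p : Fin 2 × Fin 2, p.1 = i ∧ ∃ s, e p = Sum.inr s := by
      intro i
      have hnadj : ¬ (stackedPath n).Adj (e (i, 0)) (e (i, 1)) := by
        intro h
        have := e.map_rel_iff.1 h
        exact this.2 ⟨rfl, Fin.zero_ne_one⟩
      rcases h0 : e (i, 0) with c | s
      · rcases h1 : e (i, 1) with d | t
        · exfalso
          apply hnadj
          rw [h0, h1]
          refine sp_inl_inl n (fun h => ?_)
          have := e.injective (h0.trans (h ▸ h1.symm))
          simp [Prod.ext_iff] at this
        · exact ⟨(i, 1), rfl, t, h1⟩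
      · exact ⟨(i, 0), rfl, s, h0⟩
    obtain ⟨p, hp, s, hs⟩ := hpair 0
    obtain ⟨q, hq, t, ht⟩ := hpair 1
    -- p and q are cross-adjacent in the complement
    have hadj : ((matchingGraph 2)ᶜ).Adj p q := by
      constructor
      · intro h; subst h; rw [hq] at hp; exact absurd hp (by decide)
      · intro h
        have : p.1 = q.1 := h.1
        rw [hp, hq] at this
        exact absurd this (by decide)
    have := e.map_rel_iff.2 hadj
    rw [hs, ht] at this
    exact sp_not_inr_inr n s t this
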